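/- Let h(t) = sin⁶ t and g_ε = 1 + ε·h with ε ∈ (−1/7, 2/5). Then for all t ∈ [0, π]: (i) g_ε(π) + g_ε(t)·cos t > 0 for t ∈ [0, π); (ii) 2g_ε'(t)² − g_ε(t)g_ε''(t) + g_ε(t)² > 0; and (iii) g_ε(t)·sin t − g_ε'(t)·cos t > 0 for t ∈ (0, π). -/

import Mathlib

open Real

set_option maxHeartbeats 1000000 in
private lemma key_quad (ε x : ℝ) (h1 : -(1/7) < ε) (h2 : ε < 2/5) (hx0 : 0 ≤ x) (hx1 : x ≤ 1) :
    0 < 1 + 2*ε*x^2*(19*x-15) + 7*ε^2*x^5*(6-5*x) := by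
  have hd : 0 < ε + 1/7 := by linarith
  have h1x : (0:ℝ) ≤ 1 - x := by linarith
  rcases le_or_gt 0 (19*x - 15 - 6*x^3 + 5*x^4) with hu | hu
  · -- Case A
    have hq : 5 ≤ 5*x^5-x^4-x^3+37*x^2+7*x+7 := by
      nlinarith [pow_le_one₀ hx0 hx1 (n:=4), pow_le_one₀ hx0 hx1 (n:=3), pow_nonneg hx0 5,
        mul_nonneg hx0 hx0]
    have hA : 0 ≤ (ε+1/7)^2 * (7*x^5*(6-5*x)) := by
      have h65 : (0:ℝ) ≤ 6 - 5*x := by linarith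
      positivity
    rcases le_or_gt x (6/7) with hc | hc
    · nlinarith [mul_nonneg (show (0:ℝ) ≤ 1 - x - 1/7 by linarith)
        (show (0:ℝ) ≤ 5*x^5-x^4-x^3+37*x^2+7*x+7 - 5 by linarith),
        mul_nonneg (mul_nonneg hd.le (mul_nonneg hx0 hx0)) hu, hA,
        mul_nonneg h1x (show (0:ℝ) ≤ 5*x^5-x^4-x^3+37*x^2+7*x+7 by linarith)]
    · have hupos : 0 < 19*x - 15 - 6*x^3 + 5*x^4 := by
        nlinarith [mul_nonneg (sq_nonneg (x-1)) (show (0:ℝ) ≤ 5*x^2+4*x+3 by positivity)]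
      nlinarith [mul_pos (mul_pos hd (show (0:ℝ) < x^2 by nlinarith)) hupos, hA,
        mul_nonneg h1x (show (0:ℝ) ≤ 5*x^5-x^4-x^3+37*x^2+7*x+7 by linarith)]
  · rcases lt_or_ge 0 (75 - 95*x - 84*x^3 + 70*x^4) with hv | hv
    · -- Case B2
      have hr : 0 < 25 - 300*x^2 + 380*x^3 + 168*x^5 - 140*x^6 := by
        nlinarith [sq_nonneg (60*x - 29), mul_nonneg (sq_nonneg (60*x-29)) hx0,
          mul_nonneg (sq_nonneg (60*x-29)) h1x,
          mul_nonneg (mul_nonneg (sq_nonneg (60*x-29)) hx0) hx0,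
          mul_nonneg (mul_nonneg (sq_nonneg (60*x-29)) hx0) h1x,
          mul_nonneg (mul_nonneg (sq_nonneg (60*x-29)) h1x) h1x,
          mul_nonneg (mul_nonneg (mul_nonneg (sq_nonneg (60*x-29)) hx0) hx0) h1x,
          mul_nonneg (mul_nonneg (mul_nonneg (sq_nonneg (60*x-29)) hx0) hx0) hx0,
          mul_nonneg (mul_nonneg (mul_nonneg (sq_nonneg (60*x-29)) hx0) h1x) h1x,
          mul_nonneg hx0 h1x, mul_nonneg (mul_nonneg hx0 hx0) h1x]
      have he : (0:ℝ) ≤ 2/5 - ε := by linarith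
      nlinarith [hr, mul_nonneg (mul_nonneg he (mul_nonneg hx0 hx0)) hv.le,
        mul_nonneg (mul_nonneg (sq_nonneg (2/5-ε)) (pow_nonneg hx0 5))
          (show (0:ℝ) ≤ 6-5*x by linarith)]
    · -- Case B3
      have hx23 : (2:ℝ)/3 ≤ x := by
        by_contra hcon
        push_neg at hcon
        nlinarith [pow_nonneg hx0 3, pow_nonneg hx0 4, mul_nonneg (mul_nonneg hx0 hx0) hx0]
      have hx9 : x ≤ 9/10 := by
        by_contra hcon
        push_neg at hcon
        nlinarith [mul_nonneg (mul_nonneg hx0 hx0) hx0]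
      have hw : 0 < 612*x - 396*x^2 - 225 := by
        nlinarith [mul_nonneg (show (0:ℝ) ≤ x - 2/3 by linarith)
          (show (0:ℝ) ≤ 9/10 - x by linarith)]
      have hApos : 0 < 7*x^5*(6-5*x) := by
        have hxp : (0:ℝ) < x := by linarith
        have h65 : (0:ℝ) < 6 - 5*x := by linarith
        positivity
      nlinarith [sq_nonneg (14*x^5*(6-5*x)*ε + 2*x^2*(19*x-15)),
        mul_pos (pow_pos (show (0:ℝ) < x by linarith) 4) hw, hApos]

private lemma key_one (ε s c : ℝ) (h1 : -(1/7) < ε) (h2 : ε < 2/5) (hs : 0 ≤ s) (hc1 : -1 < c)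
    (hc2 : c ≤ 1) (hsc : s^2 + c^2 = 1) :
    0 < 1 + (1 + ε * s^6) * c := by
  have hs1 : s ≤ 1 := by nlinarith [sq_nonneg c]
  have h6 : s^6 ≤ 1 := pow_le_one₀ hs hs1
  have h6' : 0 ≤ s^6 := by positivity
  rcases le_or_gt 0 c with hc | hc
  · nlinarith [mul_nonneg (show (0:ℝ) ≤ 1 + ε*s^6 by nlinarith) hc]
  · have hs6 : s^6 = (1-c^2)^3 := by
      have h : s^2 = 1 - c^2 := by linarith
      rw [show s^6 = (s^2)^3 by ring, h]
    have hbr : 0 < 1 - (2/5)*(-c)*(1-c)*(1-c^2)^2 := by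
      have e1 : (0:ℝ) ≤ 1 - c^2 := by nlinarith
      have e2 : (1-c^2)^2 ≤ 1 := by nlinarith
      nlinarith [mul_nonneg (show (0:ℝ) ≤ -c by linarith) (show (0:ℝ) ≤ 1-c by linarith),
        mul_nonneg (mul_nonneg (show (0:ℝ) ≤ -c by linarith)
          (show (0:ℝ) ≤ 1-c by linarith)) (sq_nonneg (1-c^2))]
    nlinarith [mul_pos (show (0:ℝ) < 1 + c by linarith) hbr,
      mul_nonneg (mul_nonneg (show (0:ℝ) ≤ 2/5 - ε by linarith) h6')
        (show (0:ℝ) ≤ -c by linarith)]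

theorem spheres_fill_stmt19 (ε : ℝ) (hε : ε ∈ Set.Ioo (-(1 / 7) : ℝ) (2 / 5)) :
    (∀ t ∈ Set.Ico 0 π,
      0 < (1 + ε * Real.sin π ^ 6) + (1 + ε * Real.sin t ^ 6) * Real.cos t) ∧
    (∀ t ∈ Set.Icc 0 π,
      0 < 2 * deriv (fun s => 1 + ε * Real.sin s ^ 6) t ^ 2 -
          (1 + ε * Real.sin t ^ 6) * iteratedDeriv 2 (fun s => 1 + ε * Real.sin s ^ 6) t +
          (1 + ε * Real.sin t ^ 6) ^ 2) ∧
    (∀ t ∈ Set.Ioo 0 π,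
      0 < (1 + ε * Real.sin t ^ 6) * Real.sin t -
          deriv (fun s => 1 + ε * Real.sin s ^ 6) t * Real.cos t) := by
  obtain ⟨hε1, hε2⟩ := hε
  have hg' : ∀ t : ℝ, HasDerivAt (fun s => 1 + ε * Real.sin s ^ 6)
      (ε * (6 * Real.sin t ^ 5 * Real.cos t)) t := by
    intro t
    have h := (((Real.hasDerivAt_sin t).fun_pow 6).const_mul ε).const_add 1
    refine h.congr_deriv ?_
    push_cast; norm_num
  have hderiv : deriv (fun s => 1 + ε * Real.sin s ^ 6) =
      fun t => ε * (6 * Real.sin t ^ 5 * Real.cos t) := funext fun t => (hg' t).deriv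
  have h2d : ∀ t : ℝ, iteratedDeriv 2 (fun s => 1 + ε * Real.sin s ^ 6) t
      = ε * 6 * (5 * Real.sin t ^ 4 * Real.cos t ^ 2 - Real.sin t ^ 6) := by
    intro t
    have h1 : HasDerivAt (fun u => ε * (6 * Real.sin u ^ 5 * Real.cos u))
        (ε * 6 * (5 * Real.sin t ^ 4 * Real.cos t ^ 2 - Real.sin t ^ 6)) t := by
      have h := ((((Real.hasDerivAt_sin t).fun_pow 5).fun_mul
        (Real.hasDerivAt_cos t)).const_mul 6).const_mul ε
      convert h using 1
      · exact rfl
      · exact rfl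
      · funext u; ring
      · push_cast
        norm_num
        ring
    rw [show (2:ℕ) = 1 + 1 from rfl, iteratedDeriv_succ, iteratedDeriv_one, hderiv, h1.deriv]
  refine ⟨?_, ?_, ?_⟩
  · rintro t ⟨ht0, htπ⟩
    have hs : 0 ≤ Real.sin t := Real.sin_nonneg_of_nonneg_of_le_pi ht0 htπ.le
    have hc1 : -1 < Real.cos t := by
      have := Real.cos_lt_cos_of_nonneg_of_le_pi ht0 le_rfl htπ
      rwa [Real.cos_pi] at this
    have hc2 : Real.cos t ≤ 1 := Real.cos_le_one t
    have hsc : Real.sin t ^ 2 + Real.cos t ^ 2 = 1 := Real.sin_sq_add_cos_sq t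
    have := key_one ε (Real.sin t) (Real.cos t) hε1 hε2 hs hc1 hc2 hsc
    rw [Real.sin_pi]
    norm_num
    linarith [this]
  · rintro t ⟨ht0, htπ⟩
    rw [hderiv, h2d]
    have hsc : Real.sin t ^ 2 + Real.cos t ^ 2 = 1 := Real.sin_sq_add_cos_sq t
    have hs : 0 ≤ Real.sin t ^ 2 := sq_nonneg _
    have hs1 : Real.sin t ^ 2 ≤ 1 := Real.sin_sq_le_one t
    have hkey := key_quad ε (Real.sin t ^ 2) hε1 hε2 hs hs1
    have heq : 2 * (ε * (6 * Real.sin t ^ 5 * Real.cos t)) ^ 2 -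
        (1 + ε * Real.sin t ^ 6) *
          (ε * 6 * (5 * Real.sin t ^ 4 * Real.cos t ^ 2 - Real.sin t ^ 6)) +
        (1 + ε * Real.sin t ^ 6) ^ 2
        = 1 + 2*ε*(Real.sin t ^ 2)^2*(19*(Real.sin t ^ 2)-15) +
          7*ε^2*(Real.sin t ^ 2)^5*(6-5*(Real.sin t ^ 2)) := by
      linear_combination (42*ε^2*Real.sin t^10 - 30*ε*Real.sin t^4) * hsc
    rw [heq]
    exact hkey
  · rintro t ⟨ht0, htπ⟩
    rw [hderiv]
    have hs : 0 < Real.sin t := Real.sin_pos_of_pos_of_lt_pi ht0 htπ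
    have hs1 : Real.sin t ≤ 1 := Real.sin_le_one t
    have hsc : Real.sin t ^ 2 + Real.cos t ^ 2 = 1 := Real.sin_sq_add_cos_sq t
    have key : 0 < 1 + ε * Real.sin t ^ 4 * (7 * Real.sin t ^ 2 - 6) := by
      nlinarith [sq_nonneg (Real.sin t ^ 2 - 2/3), pow_nonneg hs.le 4,
        pow_le_one₀ hs.le hs1 (n:=6), pow_le_one₀ hs.le hs1 (n:=4),
        mul_nonneg (pow_nonneg hs.le 4) (sq_nonneg (Real.sin t ^ 2 - 2/3)),
        sq_nonneg (Real.sin t ^ 3 - Real.sin t), sq_nonneg ε]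
    have hc2 : Real.cos t ^ 2 = 1 - Real.sin t ^ 2 := by linarith
    have heq : (1 + ε * Real.sin t ^ 6) * Real.sin t -
        ε * (6 * Real.sin t ^ 5 * Real.cos t) * Real.cos t
        = Real.sin t * (1 + ε * Real.sin t ^ 4 * (7 * Real.sin t ^ 2 - 6)) := by
      rw [show ε * (6 * Real.sin t ^ 5 * Real.cos t) * Real.cos t
          = 6*ε*Real.sin t ^ 5*(Real.cos t ^ 2) by ring, hc2]
      ring
    rw [heq]
    positivity
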